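/- Every element x ∈ 𝔰𝔭_{2n}(k) is Sp_{2n}(k)-conjugate to an element of the Borel subalgebra 𝔟: there exists g ∈ Sp_{2n}(k) with g·x·g⁻¹ of block form [[a,b],[0,ᵀa]] with a upper triangular and ᵀb = b. Equivalently, ⋃_{g ∈ Sp_{2n}(k)} g·𝔟·g⁻¹ = 𝔰𝔭_{2n}(k). -/

import Mathlib

open Matrix Module

/-- The Gram matrix `J = [[0, 1ₙ], [1ₙ, 0]]` of the symplectic form. -/
def Jsp (k : Type*) [Field k] (n : ℕ) : Matrix (Fin n ⊕ Fin n) (Fin n ⊕ Fin n) k :=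
  Matrix.fromBlocks 0 1 1 0



theorem key (k : Type) [Field k] [IsAlgClosed k] [CharP k 2] (m : ℕ) :
    ∀ (W : Type) [AddCommGroup W] [Module k W] [FiniteDimensional k W]
      (B : W →ₗ[k] W →ₗ[k] k) (x : W →ₗ[k] W),
      Module.finrank k W = 2 * m →
      (∀ w, B w w = 0) →
      (∀ w, (∀ w', B w w' = 0) → w = 0) →
      (∀ u v, B (x u) v = B u (x v)) →
      ∃ e f : Fin m → W,
        (∀ i j, B (e i) (e j) = 0) ∧
        (∀ i j, B (f i) (f j) = 0) ∧
        (∀ i j, B (e i) (f j) = if i = j then 1 else 0) ∧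
        (∀ j, ∃ c : Fin m → k, (∀ i, j < i → c i = 0) ∧ x (e j) = ∑ i, c i • e i) := by
  induction m with
  | zero =>
    intro W _ _ _ B x _ _ _ _
    exact ⟨fun i => i.elim0, fun i => i.elim0, fun i => i.elim0, fun i => i.elim0,
      fun i => i.elim0, fun j => j.elim0⟩
  | succ m ih =>
    intro W _ _ _ B x hdim halt hnd hsa
    have hsymm : ∀ u v, B u v = B v u := by
      intro u v
      have h := halt (u + v)
      simp only [_root_.map_add, LinearMap.add_apply, halt u, halt v, zero_add, add_zero] at h
      rw [add_comm] at h
      have h2 : B u v - B v u = B u v + B v u := CharTwo.sub_eq_add _ _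
      rw [h] at h2
      exact sub_eq_zero.mp h2
    have hpos : 0 < finrank k W := by rw [hdim]; omega
    have : Nontrivial W := Module.finrank_pos_iff.mp hpos
    obtain ⟨μ, hμ⟩ := Module.End.exists_eigenvalue x
    obtain ⟨e₀, hv⟩ := hμ.exists_hasEigenvector
    have hxe₀ : x e₀ = μ • e₀ := hv.apply_eq_smul
    have he₀ : e₀ ≠ 0 := hv.2
    have hex : ∃ w, B e₀ w ≠ 0 := by
      by_contra h
      push_neg at h
      exact he₀ (hnd e₀ h)
    obtain ⟨w, hw⟩ := hex
    obtain ⟨f₀, hBef⟩ : ∃ f₀, B e₀ f₀ = 1 :=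
      ⟨(B e₀ w)⁻¹ • w, by rw [_root_.map_smul, smul_eq_mul, inv_mul_cancel₀ hw]⟩
    have hee : B e₀ e₀ = 0 := halt _
    have hff : B f₀ f₀ = 0 := halt _
    have hBfe : B f₀ e₀ = 1 := by rw [hsymm]; exact hBef
    set φ : W →ₗ[k] k × k := (B e₀).prod (B f₀) with hφ
    set W₁ : Submodule k W := LinearMap.ker φ with hW₁
    have hW₁mem : ∀ u, u ∈ W₁ ↔ B e₀ u = 0 ∧ B f₀ u = 0 := by
      intro u
      simp [hW₁, hφ, LinearMap.mem_ker, LinearMap.prod_apply, Prod.ext_iff]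
    have hsurj : Function.Surjective φ := by
      intro p
      refine ⟨p.2 • e₀ + p.1 • f₀, ?_⟩
      simp [hφ, LinearMap.prod_apply, _root_.map_add, _root_.map_smul, smul_eq_mul, hee, hff, hBef, hBfe,
        Prod.ext_iff]
    have hdim₁ : finrank k ↥W₁ = 2 * m := by
      have h1 := LinearMap.finrank_range_add_finrank_ker φ
      rw [LinearMap.range_eq_top.mpr hsurj, finrank_top] at h1
      have h2 : finrank k (k × k) = 2 := by simp [Module.finrank_prod]
      rw [h2, hdim] at h1
      rw [hW₁]
      omega
    set B₁ : ↥W₁ →ₗ[k] ↥W₁ →ₗ[k] k := B.compl₁₂ W₁.subtype W₁.subtype with hB₁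
    have hB₁app : ∀ u v : ↥W₁, B₁ u v = B ↑u ↑v := fun u v => rfl
    set g : ↥W₁ →ₗ[k] W :=
      (x ∘ₗ W₁.subtype) - ((B f₀) ∘ₗ (x ∘ₗ W₁.subtype)).smulRight e₀ with hgdef
    have hg : ∀ u : ↥W₁, g u = x ↑u - B f₀ (x ↑u) • e₀ := fun u => rfl
    have hBe₀x : ∀ u : ↥W₁, B e₀ (x ↑u) = 0 := by
      intro u
      rw [← hsa, hxe₀, _root_.map_smul, LinearMap.smul_apply, smul_eq_mul,
        ((hW₁mem ↑u).mp u.2).1, mul_zero]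
    have hgmem : ∀ u : ↥W₁, g u ∈ W₁ := by
      intro u
      rw [hW₁mem]
      constructor
      · rw [hg, _root_.map_sub, _root_.map_smul, smul_eq_mul, hee, mul_zero, sub_zero, hBe₀x]
      · rw [hg, _root_.map_sub, _root_.map_smul, smul_eq_mul, hBfe, mul_one, sub_self]
    set xbar : ↥W₁ →ₗ[k] ↥W₁ := g.codRestrict W₁ hgmem with hxbar
    have hxbarapp : ∀ u : ↥W₁, (↑(xbar u) : W) = x ↑u - B f₀ (x ↑u) • e₀ := fun u => rfl
    -- hypotheses for ih
    have halt₁ : ∀ u : ↥W₁, B₁ u u = 0 := fun u => halt _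
    have hmemE : ∀ u : ↥W₁, B e₀ ↑u = 0 := fun u => ((hW₁mem ↑u).mp u.2).1
    have hmemF : ∀ u : ↥W₁, B f₀ ↑u = 0 := fun u => ((hW₁mem ↑u).mp u.2).2
    have hnd₁ : ∀ u : ↥W₁, (∀ v : ↥W₁, B₁ u v = 0) → u = 0 := by
      intro u hu
      have hcoe : (↑u : W) = 0 := by
        apply hnd
        intro v
        have hv' : v - B f₀ v • e₀ - B e₀ v • f₀ ∈ W₁ := by
          rw [hW₁mem]
          constructor
          · rw [_root_.map_sub, _root_.map_sub, _root_.map_smul, _root_.map_smul, smul_eq_mul, smul_eq_mul,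
              hee, hBef, mul_zero, mul_one, sub_zero]
            exact sub_self _
          · rw [_root_.map_sub, _root_.map_sub, _root_.map_smul, _root_.map_smul, smul_eq_mul, smul_eq_mul,
              hBfe, hff, mul_zero, mul_one, sub_zero]
            exact sub_self _
        have hdecomp : v = (v - B f₀ v • e₀ - B e₀ v • f₀) + B f₀ v • e₀ + B e₀ v • f₀ := by
          abel
        rw [hdecomp, _root_.map_add, _root_.map_add, _root_.map_smul, _root_.map_smul, smul_eq_mul, smul_eq_mul]
        have h1 : B ↑u (v - B f₀ v • e₀ - B e₀ v • f₀) = 0 := hu ⟨_, hv'⟩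
        have h2 : B ↑u e₀ = 0 := by rw [hsymm]; exact hmemE u
        have h3 : B ↑u f₀ = 0 := by rw [hsymm]; exact hmemF u
        rw [h1, h2, h3, mul_zero, mul_zero, add_zero, add_zero]
      exact Subtype.ext hcoe
    have hsa₁ : ∀ u v : ↥W₁, B₁ (xbar u) v = B₁ u (xbar v) := by
      intro u v
      have hl : B ↑(xbar u) ↑v = B (x ↑u) ↑v := by
        rw [hxbarapp, _root_.map_sub, LinearMap.sub_apply, _root_.map_smul, LinearMap.smul_apply,
          smul_eq_mul, hmemE v, mul_zero, sub_zero]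
      have hr : B ↑u ↑(xbar v) = B ↑u (x ↑v) := by
        have h3 : B ↑u e₀ = 0 := by rw [hsymm]; exact hmemE u
        rw [hxbarapp, _root_.map_sub, _root_.map_smul, smul_eq_mul, h3, mul_zero, sub_zero]
      rw [hB₁app, hB₁app, hl, hr, hsa]
    obtain ⟨e, f, h1, h2, h3, h4⟩ := ih ↥W₁ B₁ xbar hdim₁ halt₁ hnd₁ hsa₁
    set E : Fin (m + 1) → W := Fin.cases e₀ (fun i => ↑(e i)) with hE
    set F : Fin (m + 1) → W := Fin.cases f₀ (fun i => ↑(f i)) with hF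
    have hE0 : E 0 = e₀ := rfl
    have hEs : ∀ i, E i.succ = ↑(e i) := fun i => by simp [hE]
    have hF0 : F 0 = f₀ := rfl
    have hFs : ∀ i, F i.succ = ↑(f i) := fun i => by simp [hF]
    refine ⟨E, F, ?_, ?_, ?_, ?_⟩
    · intro i j
      induction i using Fin.cases with
      | zero =>
        induction j using Fin.cases with
        | zero => rw [hE0]; exact hee
        | succ j => rw [hE0, hEs]; exact hmemE (e j)
      | succ i =>
        induction j using Fin.cases with
        | zero => rw [hE0, hEs, hsymm]; exact hmemE (e i)
        | succ j => rw [hEs, hEs, ← hB₁app]; exact h1 i j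
    · intro i j
      induction i using Fin.cases with
      | zero =>
        induction j using Fin.cases with
        | zero => rw [hF0]; exact hff
        | succ j => rw [hF0, hFs]; exact hmemF (f j)
      | succ i =>
        induction j using Fin.cases with
        | zero => rw [hF0, hFs, hsymm]; exact hmemF (f i)
        | succ j => rw [hFs, hFs, ← hB₁app]; exact h2 i j
    · intro i j
      induction i using Fin.cases with
      | zero =>
        induction j using Fin.cases with
        | zero => rw [hE0, hF0, if_pos rfl]; exact hBef
        | succ j =>
          rw [hE0, hFs, if_neg (Fin.succ_ne_zero j).symm]
          exact hmemE (f j)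
      | succ i =>
        induction j using Fin.cases with
        | zero =>
          rw [hEs, hF0, if_neg (Fin.succ_ne_zero i), hsymm]
          exact hmemF (e i)
        | succ j =>
          rw [hEs, hFs, ← hB₁app]
          rw [h3 i j]
          simp [Fin.succ_inj]
    · intro j
      induction j using Fin.cases with
      | zero =>
        refine ⟨fun i => if i = 0 then μ else 0, fun i hi => if_neg (Fin.pos_iff_ne_zero.mp hi), ?_⟩
        rw [hE0, hxe₀,
          Finset.sum_eq_single (0 : Fin (m + 1)) (fun b _ hb => by simp [hb]) (by simp)]
        simp [hE0]
      | succ j =>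
        obtain ⟨c, hc0, hc1⟩ := h4 j
        refine ⟨Fin.cases (B f₀ (x ↑(e j))) c, ?_, ?_⟩
        · intro i hi
          induction i using Fin.cases with
          | zero => exact absurd hi (Fin.not_lt_zero _)
          | succ i =>
            simpa using hc0 i (by rwa [Fin.succ_lt_succ_iff] at hi)
        · have hco : (↑(xbar (e j)) : W) = ∑ i, c i • (↑(e i) : W) := by
            rw [hc1]
            push_cast [Submodule.coe_sum, SetLike.val_smul]
            rfl
          rw [hEs, Fin.sum_univ_succ]
          simp only [Fin.cases_zero, Fin.cases_succ, hE0, hEs]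
          rw [← hco]
          rw [hxbarapp]
          abel

variable {k : Type} [Field k] {n : ℕ}

lemma aux_Jmul (u : Fin n ⊕ Fin n → k) :
    (Jsp k n).mulVec u = Sum.elim (fun i => u (Sum.inr i)) (fun i => u (Sum.inl i)) := by
  funext s
  cases s with
  | inl i =>
    simp [Jsp, Matrix.mulVec, dotProduct, Fintype.sum_sum_type, Matrix.one_apply,
      Finset.sum_ite_eq']
  | inr i =>
    simp [Jsp, Matrix.mulVec, dotProduct, Fintype.sum_sum_type, Matrix.one_apply,
      Finset.sum_ite_eq']

lemma aux_JJ : Jsp k n * Jsp k n = 1 := by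
  simp [Jsp, Matrix.fromBlocks_multiply, Matrix.fromBlocks_one]

lemma aux_inv_symp (J g : Matrix (Fin n ⊕ Fin n) (Fin n ⊕ Fin n) k) (hg : IsUnit g.det)
    (h : gᵀ * J * g = J) : (g⁻¹)ᵀ * J * g⁻¹ = J := by
  rw [Matrix.transpose_nonsing_inv]
  calc (gᵀ)⁻¹ * J * g⁻¹ = (gᵀ)⁻¹ * (gᵀ * J * g) * g⁻¹ := by rw [h]
    _ = J := by
        simp only [← Matrix.mul_assoc]
        rw [Matrix.nonsing_inv_mul _ (by rwa [Matrix.det_transpose]), Matrix.one_mul,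
          Matrix.mul_assoc, Matrix.mul_nonsing_inv _ hg, Matrix.mul_one]

lemma aux_conj (J g x : Matrix (Fin n ⊕ Fin n) (Fin n ⊕ Fin n) k) (hg : IsUnit g.det)
    (h : gᵀ * J * g = J) (hx : xᵀ * J = J * x) :
    (g * x * g⁻¹)ᵀ * J = J * (g * x * g⁻¹) := by
  have hgt : IsUnit gᵀ.det := by rwa [Matrix.det_transpose]
  have h1 : gᵀ * J = J * g⁻¹ := by
    calc gᵀ * J = gᵀ * J * (g * g⁻¹) := by rw [Matrix.mul_nonsing_inv _ hg, Matrix.mul_one]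
      _ = (gᵀ * J * g) * g⁻¹ := by simp only [Matrix.mul_assoc]
      _ = J * g⁻¹ := by rw [h]
  have h2 : (gᵀ)⁻¹ * J = J * g := by
    calc (gᵀ)⁻¹ * J = (gᵀ)⁻¹ * (gᵀ * J * g) := by rw [h]
      _ = ((gᵀ)⁻¹ * gᵀ) * (J * g) := by simp only [Matrix.mul_assoc]
      _ = J * g := by rw [Matrix.nonsing_inv_mul _ hgt, Matrix.one_mul]
  calc (g * x * g⁻¹)ᵀ * J = (gᵀ)⁻¹ * (xᵀ * (gᵀ * J)) := by
        rw [Matrix.transpose_mul, Matrix.transpose_mul, Matrix.transpose_nonsing_inv]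
        simp only [Matrix.mul_assoc]
    _ = (gᵀ)⁻¹ * ((xᵀ * J) * g⁻¹) := by rw [h1]; simp only [Matrix.mul_assoc]
    _ = ((gᵀ)⁻¹ * J) * (x * g⁻¹) := by rw [hx]; simp only [Matrix.mul_assoc]
    _ = J * (g * x * g⁻¹) := by rw [h2]; simp only [Matrix.mul_assoc]

lemma aux_unconj (g x : Matrix (Fin n ⊕ Fin n) (Fin n ⊕ Fin n) k) (hg : IsUnit g.det) :
    g⁻¹ * (g * x * g⁻¹) * g = x := by
  simp only [← Matrix.mul_assoc]
  rw [Matrix.nonsing_inv_mul _ hg, Matrix.one_mul, Matrix.mul_assoc,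
    Matrix.nonsing_inv_mul _ hg, Matrix.mul_one]

lemma aux_borel_symp (a b : Matrix (Fin n) (Fin n) k) (hb : bᵀ = b) :
    (Matrix.fromBlocks a b 0 aᵀ)ᵀ * Jsp k n = Jsp k n * Matrix.fromBlocks a b 0 aᵀ := by
  simp [Jsp, Matrix.fromBlocks_transpose, Matrix.fromBlocks_multiply, hb]

theorem part1 [IsAlgClosed k] [CharP k 2]
    (x : Matrix (Fin n ⊕ Fin n) (Fin n ⊕ Fin n) k) (hx : xᵀ * Jsp k n = Jsp k n * x) :
    ∃ (g : Matrix (Fin n ⊕ Fin n) (Fin n ⊕ Fin n) k) (a b : Matrix (Fin n) (Fin n) k),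
      IsUnit g ∧ gᵀ * Jsp k n * g = Jsp k n ∧
      (∀ i j : Fin n, (j : ℕ) < (i : ℕ) → a i j = 0) ∧ bᵀ = b ∧
      g * x * g⁻¹ = Matrix.fromBlocks a b 0 aᵀ := by
  set J := Jsp k n with hJ
  set B : ((Fin n ⊕ Fin n) → k) →ₗ[k] ((Fin n ⊕ Fin n) → k) →ₗ[k] k :=
    LinearMap.mk₂ k (fun u v => u ⬝ᵥ J.mulVec v)
    (fun u u' v => add_dotProduct u u' _)
    (fun c u v => smul_dotProduct c u _)
    (fun u v v' => by simp [Matrix.mulVec_add, dotProduct_add])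
    (fun c u v => by simp [Matrix.mulVec_smul, dotProduct_smul]) with hB
  have hBapp : ∀ u v : (Fin n ⊕ Fin n) → k, B u v = u ⬝ᵥ J.mulVec v := fun u v => rfl
  -- alternating
  have halt : ∀ u : (Fin n ⊕ Fin n) → k, B u u = 0 := by
    intro u
    rw [hBapp, aux_Jmul, dotProduct]
    rw [Fintype.sum_sum_type]
    simp only [Sum.elim_inl, Sum.elim_inr]
    rw [Finset.sum_congr rfl (fun i _ => mul_comm (u (Sum.inr i)) (u (Sum.inl i)))]
    exact CharTwo.add_self_eq_zero _
  -- nondegenerate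
  have hnd : ∀ u : (Fin n ⊕ Fin n) → k, (∀ v, B u v = 0) → u = 0 := by
    intro u hu
    have h1 : Matrix.vecMul u J = 0 := by
      funext s
      have := hu (Pi.single s 1)
      rw [hBapp, Matrix.dotProduct_mulVec] at this
      rwa [dotProduct_single, mul_one] at this
    have : Matrix.vecMul (Matrix.vecMul u J) J = u := by
      rw [Matrix.vecMul_vecMul, aux_JJ, Matrix.vecMul_one]
    rw [h1] at this
    rw [← this, Matrix.zero_vecMul]
  -- dimension
  have hdim : finrank k ((Fin n ⊕ Fin n) → k) = 2 * n := by
    rw [Module.finrank_pi]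
    simp [Fintype.card_sum, two_mul]
  -- self-adjoint
  have hsa : ∀ u v : (Fin n ⊕ Fin n) → k,
      B (x.mulVecLin u) v = B u (x.mulVecLin v) := by
    intro u v
    rw [hBapp, hBapp, Matrix.mulVecLin_apply, Matrix.mulVecLin_apply]
    rw [← Matrix.vecMul_transpose, ← Matrix.dotProduct_mulVec, Matrix.mulVec_mulVec, hx,
      ← Matrix.mulVec_mulVec]
  obtain ⟨E, F, h1, h2, h3, h4⟩ := key k n ((Fin n ⊕ Fin n) → k) B x.mulVecLin hdim halt hnd hsa
  have hsymmB : ∀ u v : (Fin n ⊕ Fin n) → k, B u v = B v u := by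
    intro u v
    have h := halt (u + v)
    simp only [_root_.map_add, LinearMap.add_apply, halt u, halt v, zero_add, add_zero] at h
    rw [add_comm] at h
    have h2 : B u v - B v u = B u v + B v u := CharTwo.sub_eq_add _ _
    rw [h] at h2
    exact sub_eq_zero.mp h2
  set P : Matrix (Fin n ⊕ Fin n) (Fin n ⊕ Fin n) k :=
    Matrix.of (fun s t => Sum.elim E F t s) with hP
  have hPapp : ∀ s t, P s t = Sum.elim E F t s := fun s t => rfl
  -- Gram identity
  have hBP : ∀ s t, (Pᵀ * J * P) s t = B (Sum.elim E F s) (Sum.elim E F t) := by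
    intro s t
    rw [hBapp, dotProduct]
    simp only [Matrix.mul_apply, Matrix.transpose_apply, Matrix.mulVec, dotProduct,
      Finset.sum_mul, Finset.mul_sum]
    rw [Finset.sum_comm]
    apply Finset.sum_congr rfl
    intro r _
    apply Finset.sum_congr rfl
    intro q _
    rw [hPapp, hPapp, mul_assoc]
  have hPJP : Pᵀ * J * P = J := by
    ext s t
    rw [hBP]
    cases s with
    | inl i =>
      cases t with
      | inl j =>
        simp only [Sum.elim_inl]
        rw [h1 i j, hJ]
        simp [Jsp]
      | inr j =>
        simp only [Sum.elim_inl, Sum.elim_inr]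
        rw [h3 i j, hJ]
        simp [Jsp, Matrix.one_apply]
    | inr i =>
      cases t with
      | inl j =>
        simp only [Sum.elim_inl, Sum.elim_inr]
        rw [hsymmB, h3 j i, hJ]
        simp [Jsp, Matrix.one_apply, eq_comm]
      | inr j =>
        simp only [Sum.elim_inr]
        rw [h2 i j, hJ]
        simp [Jsp]
  have hdetJ : IsUnit J.det := by
    apply IsUnit.of_mul_eq_one J.det
    rw [← Matrix.det_mul, hJ, aux_JJ, Matrix.det_one]
  have hdetP : IsUnit P.det := by
    rw [isUnit_iff_ne_zero]
    intro h0
    have h := congrArg Matrix.det hPJP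
    rw [Matrix.det_mul, Matrix.det_mul, Matrix.det_transpose, h0, mul_zero] at h
    exact hdetJ.ne_zero h.symm
  have hPtdet : IsUnit Pᵀ.det := by rwa [Matrix.det_transpose]
  have hPinvP : P⁻¹ * P = 1 := Matrix.nonsing_inv_mul P hdetP
  have hPPinv : P * P⁻¹ = 1 := Matrix.mul_nonsing_inv P hdetP
  have hginv : P⁻¹⁻¹ = P := Matrix.nonsing_inv_nonsing_inv P hdetP
  have hgU : IsUnit P⁻¹ := by
    rw [Matrix.isUnit_iff_isUnit_det, Matrix.det_nonsing_inv, isUnit_ringInverse]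
    exact hdetP
  have hgJg : (P⁻¹)ᵀ * J * P⁻¹ = J := by
    rw [Matrix.transpose_nonsing_inv]
    calc (Pᵀ)⁻¹ * J * P⁻¹ = (Pᵀ)⁻¹ * (Pᵀ * J * P) * P⁻¹ := by rw [hPJP]
      _ = J := by
          simp only [← Matrix.mul_assoc]
          rw [Matrix.nonsing_inv_mul _ hPtdet, Matrix.one_mul, Matrix.mul_assoc, hPPinv,
            Matrix.mul_one]
  set y := P⁻¹ * x * P with hy
  have hPy : P * y = x * P := by
    rw [hy]
    simp only [← Matrix.mul_assoc]
    rw [hPPinv, Matrix.one_mul]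
  -- columns of y
  have hcols : ∀ j : Fin n, ∃ c : Fin n → k, (∀ i, j < i → c i = 0) ∧
      ∀ s, y s (Sum.inl j) = Sum.elim c (fun _ => (0 : k)) s := by
    intro j
    obtain ⟨c, hc0, hc1⟩ := h4 j
    rw [Matrix.mulVecLin_apply] at hc1
    refine ⟨c, hc0, ?_⟩
    have h6 : P.mulVec (fun s => y s (Sum.inl j)) = P.mulVec (Sum.elim c fun _ => 0) := by
      funext s
      have lhs : P.mulVec (fun s' => y s' (Sum.inl j)) s = (P * y) s (Sum.inl j) := by
        simp [Matrix.mulVec, Matrix.mul_apply, dotProduct]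
      have mid : (x * P) s (Sum.inl j) = (x.mulVec (E j)) s := by
        simp only [Matrix.mul_apply, Matrix.mulVec, dotProduct]
        apply Finset.sum_congr rfl
        intro t _
        simp [hPapp]
      have rhs : P.mulVec (Sum.elim c fun _ => 0) s = ∑ i, c i * E i s := by
        rw [Matrix.mulVec, dotProduct, Fintype.sum_sum_type]
        simp only [Sum.elim_inl, Sum.elim_inr, mul_zero, Finset.sum_const_zero, add_zero]
        apply Finset.sum_congr rfl
        intro i _
        rw [hPapp, Sum.elim_inl, mul_comm]
      rw [lhs, hPy, mid, hc1, rhs]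
      rw [Finset.sum_apply]
      apply Finset.sum_congr rfl
      intro i _
      rw [Pi.smul_apply, smul_eq_mul]
    have h7 := congrArg (fun v => P⁻¹.mulVec v) h6
    simp only [Matrix.mulVec_mulVec, hPinvP, Matrix.one_mulVec] at h7
    intro s
    exact congrFun h7 s
  -- y is symplectic
  have hyJ : yᵀ * J = J * y := by
    have hPtJ : Pᵀ * J = J * P⁻¹ := by
      calc Pᵀ * J = Pᵀ * J * (P * P⁻¹) := by rw [hPPinv, Matrix.mul_one]
        _ = (Pᵀ * J * P) * P⁻¹ := by simp only [Matrix.mul_assoc]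
        _ = J * P⁻¹ := by rw [hPJP]
    have hPtiJ : (Pᵀ)⁻¹ * J = J * P := by
      calc (Pᵀ)⁻¹ * J = (Pᵀ)⁻¹ * (Pᵀ * J * P) := by rw [hPJP]
        _ = ((Pᵀ)⁻¹ * Pᵀ) * (J * P) := by simp only [Matrix.mul_assoc]
        _ = J * P := by rw [Matrix.nonsing_inv_mul _ hPtdet, Matrix.one_mul]
    calc yᵀ * J = Pᵀ * (xᵀ * ((Pᵀ)⁻¹ * J)) := by
          rw [hy, Matrix.transpose_mul, Matrix.transpose_mul, Matrix.transpose_nonsing_inv]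
          simp only [Matrix.mul_assoc]
      _ = Pᵀ * ((xᵀ * J) * P) := by rw [hPtiJ]; simp only [Matrix.mul_assoc]
      _ = (Pᵀ * J) * (x * P) := by rw [hx]; simp only [Matrix.mul_assoc]
      _ = J * (P⁻¹ * (x * P)) := by rw [hPtJ]; simp only [Matrix.mul_assoc]
      _ = J * y := by rw [hy]; simp only [Matrix.mul_assoc]
  -- blocks
  have hc0 : y.toBlocks₂₁ = 0 := by
    ext i j
    obtain ⟨c, _, hcol⟩ := hcols j
    simp only [Matrix.toBlocks₂₁, Matrix.of_apply, Matrix.zero_apply]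
    rw [hcol (Sum.inr i), Sum.elim_inr]
  have hupper : ∀ i j : Fin n, (j : ℕ) < (i : ℕ) → y.toBlocks₁₁ i j = 0 := by
    intro i j hij
    obtain ⟨c, hc, hcol⟩ := hcols j
    simp only [Matrix.toBlocks₁₁, Matrix.of_apply]
    rw [hcol (Sum.inl i), Sum.elim_inl]
    exact hc i (by rwa [Fin.lt_def])
  have hyblocks : y = Matrix.fromBlocks y.toBlocks₁₁ y.toBlocks₁₂ y.toBlocks₂₁ y.toBlocks₂₂ :=
    (Matrix.fromBlocks_toBlocks y).symm
  have hyJ' : Matrix.fromBlocks (y.toBlocks₂₁)ᵀ (y.toBlocks₁₁)ᵀ (y.toBlocks₂₂)ᵀ (y.toBlocks₁₂)ᵀ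
      = Matrix.fromBlocks y.toBlocks₂₁ y.toBlocks₂₂ y.toBlocks₁₁ y.toBlocks₁₂ := by
    have := hyJ
    rw [hyblocks] at this
    rw [hJ] at this
    simpa [Jsp, Matrix.fromBlocks_transpose, Matrix.fromBlocks_multiply] using this
  have hd : (y.toBlocks₁₁)ᵀ = y.toBlocks₂₂ := by
    have := congrArg Matrix.toBlocks₁₂ hyJ'
    simpa [Matrix.toBlocks_fromBlocks₁₂] using this
  have hbsym : (y.toBlocks₁₂)ᵀ = y.toBlocks₁₂ := by
    have := congrArg Matrix.toBlocks₂₂ hyJ'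
    simpa [Matrix.toBlocks_fromBlocks₂₂] using this
  refine ⟨P⁻¹, y.toBlocks₁₁, y.toBlocks₁₂, hgU, hgJg, hupper, hbsym, ?_⟩
  rw [hginv, ← hy]
  conv_lhs => rw [hyblocks]
  rw [hc0, hd]

/-- Every element of `𝔰𝔭_{2n}(k)` is `Sp_{2n}(k)`-conjugate to an element of
the Borel subalgebra `𝔟 = {[[a,b],[0,aᵀ]] : a upper triangular, bᵀ = b}`; equivalently
`⋃_{g ∈ Sp_{2n}(k)} g·𝔟·g⁻¹ = 𝔰𝔭_{2n}(k)`. -/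
theorem stmt_13 (k : Type) [Field k] [IsAlgClosed k] [CharP k 2] (n : ℕ) (hn : 1 ≤ n) :
    (∀ x : Matrix (Fin n ⊕ Fin n) (Fin n ⊕ Fin n) k, xᵀ * Jsp k n = Jsp k n * x →
      ∃ (g : Matrix (Fin n ⊕ Fin n) (Fin n ⊕ Fin n) k) (a b : Matrix (Fin n) (Fin n) k),
        IsUnit g ∧ gᵀ * Jsp k n * g = Jsp k n ∧
        (∀ i j : Fin n, (j : ℕ) < (i : ℕ) → a i j = 0) ∧ bᵀ = b ∧
        g * x * g⁻¹ = Matrix.fromBlocks a b 0 aᵀ) ∧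
    {x : Matrix (Fin n ⊕ Fin n) (Fin n ⊕ Fin n) k |
      ∃ (g : Matrix (Fin n ⊕ Fin n) (Fin n ⊕ Fin n) k) (a b : Matrix (Fin n) (Fin n) k),
        IsUnit g ∧ gᵀ * Jsp k n * g = Jsp k n ∧
        (∀ i j : Fin n, (j : ℕ) < (i : ℕ) → a i j = 0) ∧ bᵀ = b ∧
        x = g * Matrix.fromBlocks a b 0 aᵀ * g⁻¹}
      = {x : Matrix (Fin n ⊕ Fin n) (Fin n ⊕ Fin n) k | xᵀ * Jsp k n = Jsp k n * x} := by
  constructor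
  · exact fun x hx => part1 x hx
  · ext x
    simp only [Set.mem_setOf_eq]
    constructor
    · rintro ⟨g, a, b, hg, hgJ, ha, hb, rfl⟩
      have hdet := (Matrix.isUnit_iff_isUnit_det g).mp hg
      exact aux_conj (Jsp k n) g _ hdet hgJ (aux_borel_symp a b hb)
    · intro hx
      obtain ⟨g, a, b, hg, hgJ, ha, hb, hconj⟩ := part1 x hx
      have hdet := (Matrix.isUnit_iff_isUnit_det g).mp hg
      refine ⟨g⁻¹, a, b, ?_, aux_inv_symp _ g hdet hgJ, ha, hb, ?_⟩
      · rw [Matrix.isUnit_iff_isUnit_det, Matrix.det_nonsing_inv, isUnit_ringInverse]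
        exact hdet
      · rw [Matrix.nonsing_inv_nonsing_inv g hdet, ← hconj]
        exact (aux_unconj g x hdet).symm
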